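/- Let β be a Pisot number satisfying Property (F) and α a conjugate of β. For every x ∈ Z[β^{-1}] with x > 0, the conjugate x' ∈ Z[α^{-1}] has a finite α-adic expansion; namely if the (finite) β-expansion of x is x = Σ_{i=-j}^{k} x_i β^i with admissible digits x_i ∈ {0,…,⌊β⌋}, then x' = Σ_{i=-j}^{k} x_i α^i. -/

import Mathlib

/-- The β-transformation T_β(x) = {βx}. -/
noncomputable def betaMap (β : ℝ) : ℝ → ℝ := fun x => Int.fract (β * x)

/-- β is a Pisot number. -/
def IsPisot (β : ℝ) : Prop :=
  1 < β ∧ IsIntegral ℤ β ∧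
    ∀ z : ℂ, Polynomial.aeval z (minpoly ℤ β) = 0 → z ≠ (β : ℂ) → ‖z‖ < 1

/-- x ≥ 0 has a finite (greedy) β-expansion: for some k with x/β^k ∈ [0,1),
the β-transformation iteration starting from x/β^k terminates at 0. -/
def HasFiniteBetaExpansion (β : ℝ) (x : ℝ) : Prop :=
  ∃ k N : ℕ, x / β ^ k ∈ Set.Ico (0 : ℝ) 1 ∧ (betaMap β)^[N] (x / β ^ k) = 0

/-- Let β be a Pisot number satisfying Property (F)
(Fin(β) = ℤ[β⁻¹]) and α a conjugate of β.  For every x ∈ ℤ[β⁻¹] with x > 0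
(here presented by an integer digit representation c, so that its conjugate is
x' = Σ c_i α^i), the conjugate x' has a finite α-adic expansion: if the finite
greedy β-expansion of x is x = Σ_{i=-j}^k d_i β^i with digits d_i ∈ {0,…,⌊β⌋}
(greedy: every tail Σ_{i<n} d_i β^i is < β^n), then x' = Σ_{i=-j}^k d_i α^i. -/
theorem conjugate_has_finite_expansion (β : ℝ) (α : ℂ)
    (hβ : IsPisot β)
    (hroot : Polynomial.aeval α (minpoly ℤ β) = 0) (hne : α ≠ (β : ℂ))
    (hF : ∀ y : ℝ, y ∈ Subring.closure ({β, β⁻¹} : Set ℝ) ↔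
      HasFiniteBetaExpansion β |y|)
    (x : ℝ) (hx : x ∈ Subring.closure ({β, β⁻¹} : Set ℝ)) (hxpos : 0 < x)
    (c : ℤ → ℤ) (hcfin : (Function.support c).Finite)
    (hc : HasSum (fun i : ℤ => (c i : ℝ) * β ^ i) x) :
    ∃ d : ℤ → ℤ,
      (∀ i, 0 ≤ d i ∧ d i ≤ ⌊β⌋) ∧
      (Function.support d).Finite ∧
      HasSum (fun i : ℤ => (d i : ℝ) * β ^ i) x ∧
      (∀ n : ℤ, ∑' i : {i : ℤ // i < n}, (d i : ℝ) * β ^ (i : ℤ) < β ^ n) ∧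
      HasSum (fun i : ℤ => (d i : ℂ) * α ^ i) (∑' i : ℤ, (c i : ℂ) * α ^ i) := by
  classical
  obtain ⟨hβ1, hint, -⟩ := hβ
  have hβ0 : (0:ℝ) < β := lt_trans one_pos hβ1
  have hβne : β ≠ 0 := ne_of_gt hβ0
  have hfx : HasFiniteBetaExpansion β |x| := (hF x).1 hx
  rw [abs_of_pos hxpos] at hfx
  obtain ⟨k, N, hy, hN⟩ := hfx
  set y : ℝ := x / β ^ k with hy_def
  set t : ℕ → ℝ := fun n => (betaMap β)^[n] y with ht_def
  set a : ℕ → ℤ := fun n => ⌊β * t n⌋ with ha_def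
  have ht0 : t 0 = y := by simp [ht_def]
  have ht_succ : ∀ n, t (n+1) = Int.fract (β * t n) := by
    intro n
    simp only [ht_def]
    rw [Function.iterate_succ_apply']
    rfl
  have ht_mem : ∀ n, 0 ≤ t n ∧ t n < 1 := by
    intro n
    cases n with
    | zero => exact ⟨hy.1, hy.2⟩
    | succ n => rw [ht_succ]; exact ⟨Int.fract_nonneg _, Int.fract_lt_one _⟩
  have hrec : ∀ n, β * t n = (a n : ℝ) + t (n+1) := by
    intro n
    rw [ht_succ n]
    have h := Int.floor_add_fract (β * t n)
    simp only [ha_def]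
    linarith
  have ha_nonneg : ∀ n, 0 ≤ a n := fun n =>
    Int.floor_nonneg.2 (mul_nonneg hβ0.le (ht_mem n).1)
  have ha_le : ∀ n, a n ≤ ⌊β⌋ := fun n =>
    Int.floor_le_floor (by nlinarith [(ht_mem n).1, (ht_mem n).2])
  have ht_zero' : ∀ j : ℕ, t (N + j) = 0 := by
    intro j
    induction j with
    | zero => simpa [ht_def] using hN
    | succ j ih =>
      rw [show N + (j+1) = (N+j)+1 by ring, ht_succ, ih, mul_zero, Int.fract_zero]
  have ht_zero : ∀ n, N ≤ n → t n = 0 := by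
    intro n hn
    obtain ⟨j, rfl⟩ := Nat.exists_eq_add_of_le hn
    exact ht_zero' j
  have ha_zero : ∀ n, N ≤ n → a n = 0 := by
    intro n hn
    simp [ha_def, ht_zero n hn]
  have key : ∀ M n : ℕ, β^M * t n =
      (∑ j ∈ Finset.range M, (a (n+j) : ℝ) * β^(M-1-j)) + t (n+M) := by
    intro M
    induction M with
    | zero => intro n; simp
    | succ M ih =>
      intro n
      rw [Finset.sum_range_succ']
      have hsum : (∑ j ∈ Finset.range M, (a (n+(j+1)) : ℝ) * β^(M+1-1-(j+1)))
          = ∑ j ∈ Finset.range M, (a ((n+1)+j) : ℝ) * β^(M-1-j) := by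
        apply Finset.sum_congr rfl
        intro j hj
        rw [show n+(j+1) = (n+1)+j by omega, show M+1-1-(j+1) = M-1-j by omega]
      rw [hsum]
      have hih := ih (n+1)
      have hr := hrec n
      have hexp : β^(M+1) = β^M * β := by ring
      rw [show n + (M+1) = (n+1) + M by omega]
      calc β^(M+1) * t n = β^M * (β * t n) := by ring
        _ = β^M * ((a n : ℝ) + t (n+1)) := by rw [hr]
        _ = β^M * t (n+1) + (a n : ℝ) * β^M := by ring
        _ = ((∑ j ∈ Finset.range M, (a ((n+1)+j) : ℝ) * β^(M-1-j)) + t ((n+1)+M))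
            + (a n : ℝ) * β^M := by rw [hih]
        _ = (∑ j ∈ Finset.range M, (a ((n+1)+j) : ℝ) * β^(M-1-j))
            + (a (n+0) : ℝ) * β^(M+1-1-0) + t ((n+1)+M) := by
              rw [show n+0 = n by ring, show M+1-1-0 = M by omega]; ring
  set s : Finset ℤ := (Finset.range N).image (fun j : ℕ => (k:ℤ) - 1 - j) with hs_def
  set d : ℤ → ℤ := fun i => if 0 ≤ (k:ℤ) - 1 - i then a ((k:ℤ) - 1 - i).toNat else 0
    with hd_def
  have hd_eq : ∀ j : ℕ, d ((k:ℤ) - 1 - j) = a j := by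
    intro j
    simp only [hd_def]
    rw [if_pos (by omega)]
    congr 1
    omega
  have hd_off : ∀ i ∉ s, d i = 0 := by
    intro i hi
    simp only [hd_def]
    split_ifs with h
    · apply ha_zero
      by_contra hlt
      push_neg at hlt
      exact hi (Finset.mem_image.2 ⟨((k:ℤ)-1-i).toNat, Finset.mem_range.2 hlt, by omega⟩)
    · rfl
  have hd_bounds : ∀ i, 0 ≤ d i ∧ d i ≤ ⌊β⌋ := by
    intro i
    have h1 : (0:ℤ) ≤ ⌊β⌋ := Int.floor_nonneg.2 (by linarith)
    simp only [hd_def]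
    split_ifs with h
    · exact ⟨ha_nonneg _, ha_le _⟩
    · exact ⟨le_refl 0, h1⟩
  have hd_fin : (Function.support d).Finite := by
    apply Set.Finite.subset s.finite_toSet
    intro i hi
    by_contra his
    exact hi (hd_off i his)
  have E0 : ∑ j ∈ Finset.range N, (a j : ℝ) * β ^ ((k:ℤ) - 1 - j) = β ^ (k:ℤ) * t 0 := by
    have h1 := key N 0
    rw [ht_zero (0 + N) (by omega), add_zero] at h1
    have h2 : β ^ (k:ℤ) * t 0 = β ^ ((k:ℤ) - N) * (β ^ N * t 0) := by
      rw [← mul_assoc, ← zpow_natCast β N, ← zpow_add₀ hβne]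
      norm_num
    rw [h2, h1, Finset.mul_sum]
    apply Finset.sum_congr rfl
    intro j hj
    have hj' := Finset.mem_range.1 hj
    rw [zero_add, ← zpow_natCast β (N - 1 - j),
        show ((N - 1 - j : ℕ) : ℤ) = (N:ℤ) - 1 - j by omega,
        show ((k:ℤ) - 1 - (j:ℤ)) = ((k:ℤ) - (N:ℤ)) + ((N:ℤ) - 1 - j) by ring,
        zpow_add₀ hβne]
    ring
  have hfil0 : s.filter (fun i => i < (k:ℤ) - ((0:ℕ):ℤ)) = s := by
    apply Finset.filter_true_of_mem
    intro i hi
    obtain ⟨j, hj, rfl⟩ := Finset.mem_image.1 hi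
    push_cast
    omega
  have claim : ∀ m : ℕ,
      (∑ i ∈ s.filter (fun i => i < (k:ℤ) - (m:ℤ)), (d i : ℝ) * β ^ i)
        = β ^ ((k:ℤ) - (m:ℤ)) * t m := by
    intro m
    induction m with
    | zero =>
      rw [hfil0]
      rw [Finset.sum_image (by intro j1 _ j2 _ h; have h' : (k:ℤ)-1-(j1:ℤ) = (k:ℤ)-1-(j2:ℤ) := h; omega)]
      have hterm : ∀ j ∈ Finset.range N,
          ((d ((k:ℤ)-1-j) : ℝ)) * β ^ ((k:ℤ)-1-(j:ℤ)) = (a j : ℝ) * β ^ ((k:ℤ)-1-(j:ℤ)) := by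
        intro j _
        rw [hd_eq]
      rw [Finset.sum_congr rfl hterm, E0]
      norm_num
    | succ m ih =>
      by_cases hm : m < N
      · have hins : s.filter (fun i => i < (k:ℤ) - (m:ℤ))
            = insert ((k:ℤ)-1-m) (s.filter (fun i => i < (k:ℤ) - ((m:ℕ)+1:ℕ))) := by
          ext i
          simp only [Finset.mem_filter, Finset.mem_insert]
          constructor
          · rintro ⟨his, hlt⟩
            by_cases he : i = (k:ℤ)-1-m
            · exact Or.inl he
            · exact Or.inr ⟨his, by push_cast; omega⟩
          · rintro (rfl | ⟨his, hlt⟩)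
            · exact ⟨Finset.mem_image.2 ⟨m, Finset.mem_range.2 hm, rfl⟩, by omega⟩
            · refine ⟨his, ?_⟩
              push_cast at hlt
              omega
        have hnot : ((k:ℤ)-1-m) ∉ s.filter (fun i => i < (k:ℤ) - ((m:ℕ)+1:ℕ)) := by
          simp only [Finset.mem_filter]
          rintro ⟨-, h⟩
          push_cast at h
          omega
        rw [hins, Finset.sum_insert hnot, hd_eq] at ih
        have hz : β ^ ((k:ℤ) - (m:ℤ)) = β ^ ((k:ℤ) - 1 - m) * β := by
          rw [← zpow_add_one₀ hβne]
          congr 1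
          ring
        rw [hz] at ih
        have hcast : ((k:ℤ) - (((m:ℕ)+1:ℕ) : ℤ)) = (k:ℤ) - 1 - m := by push_cast; ring
        conv_rhs => rw [hcast]
        have hr := hrec m
        linear_combination ih + β ^ ((k:ℤ) - 1 - (m:ℤ)) * hr
      · push_neg at hm
        have h1 : s.filter (fun i => i < (k:ℤ) - ((m+1 : ℕ):ℤ)) = ∅ := by
          rw [Finset.filter_eq_empty_iff]
          intro i hi
          obtain ⟨j, hj, rfl⟩ := Finset.mem_image.1 hi
          have := Finset.mem_range.1 hj
          push_cast
          omega
        rw [h1, Finset.sum_empty, ht_zero (m+1) (by omega), mul_zero]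
  have hx_eq : x = β ^ (k:ℤ) * t 0 := by
    rw [ht0, hy_def, zpow_natCast]
    field_simp
  have hs_sum : ∑ i ∈ s, (d i : ℝ) * β ^ i = x := by
    have h := claim 0
    rw [hfil0] at h
    rw [h, hx_eq]
    norm_num
  have hreal : HasSum (fun i : ℤ => (d i : ℝ) * β ^ i) x := by
    have h := hasSum_sum_of_ne_finset_zero (s := s) (L := SummationFilter.unconditional ℤ)
      (f := fun i : ℤ => (d i : ℝ) * β ^ i) (fun i hi => by simp [hd_off i hi])
    rwa [hs_sum] at h
  have htail : ∀ n : ℤ, ∑' i : {i : ℤ // i < n}, (d i : ℝ) * β ^ (i : ℤ) < β ^ n := by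
    intro n
    have h1 : (∑' i : {i : ℤ // i < n}, (d i : ℝ) * β ^ (i:ℤ))
        = ∑ i ∈ s.filter (fun i => i < n), (d i : ℝ) * β ^ i := by
      have e1 : (∑' i : {i : ℤ // i < n}, (d i : ℝ) * β ^ (i:ℤ))
          = ∑' i : ℤ, Set.indicator {i : ℤ | i < n} (fun i => (d i : ℝ) * β ^ i) i :=
        tsum_subtype {i : ℤ | i < n} (fun i => (d i : ℝ) * β ^ i)
      rw [e1, tsum_eq_sum (s := s.filter (fun i => i < n)) ?_]
      · apply Finset.sum_congr rfl
        intro i hi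
        exact Set.indicator_of_mem
          (show i ∈ {j : ℤ | j < n} from (Finset.mem_filter.1 hi).2) _
      · intro i hi
        by_cases hin : i < n
        · have he : Set.indicator {j : ℤ | j < n} (fun i => (d i : ℝ) * β ^ i) i
              = (d i : ℝ) * β ^ i :=
            Set.indicator_of_mem (show i ∈ {j : ℤ | j < n} from hin) _
          rw [he, hd_off i (fun hs' => hi (Finset.mem_filter.2 ⟨hs', hin⟩))]
          simp
        · exact Set.indicator_of_notMem (show i ∉ {j : ℤ | j < n} from hin) _
    rcases le_or_gt n (k:ℤ) with hnk | hkn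
    · have hm : (k:ℤ) - ((((k:ℤ) - n).toNat : ℕ) : ℤ) = n := by omega
      have h2 := claim ((k:ℤ) - n).toNat
      rw [hm] at h2
      rw [h1, h2]
      have hb := zpow_pos hβ0 n
      nlinarith [(ht_mem (((k:ℤ) - n).toNat)).2]
    · have hfiln : s.filter (fun i => i < n) = s := by
        apply Finset.filter_true_of_mem
        intro i hi
        obtain ⟨j, hj, rfl⟩ := Finset.mem_image.1 hi
        omega
      rw [h1, hfiln, hs_sum, hx_eq]
      have h2 : β ^ (k:ℤ) < β ^ n := zpow_lt_zpow_right₀ hβ1 hkn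
      have hb := zpow_pos hβ0 (k:ℤ)
      nlinarith [(ht_mem 0).1, (ht_mem 0).2]
  have hα0 : α ≠ 0 := by
    intro h0
    rw [h0] at hroot
    have hc0 : (minpoly ℤ β).coeff 0 = 0 := by
      have h1 : ((minpoly ℤ β).coeff 0 : ℂ) = 0 := by
        simpa [Polynomial.aeval_def, Polynomial.eval₂_at_zero] using hroot
      exact_mod_cast h1
    obtain ⟨q, hq⟩ := Polynomial.X_dvd_iff.2 hc0
    have hirr : Irreducible (minpoly ℤ β) := minpoly.irreducible hint
    rcases hirr.isUnit_or_isUnit hq with hu | hu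
    · exact Polynomial.not_isUnit_X hu
    · obtain ⟨r, hr, hrq⟩ := Polynomial.isUnit_iff.1 hu
      have hev : (Polynomial.aeval β) (minpoly ℤ β) = 0 := minpoly.aeval ℤ β
      rw [hq, ← hrq, map_mul, Polynomial.aeval_X, Polynomial.aeval_C] at hev
      have hr0 : ((r : ℤ) : ℝ) ≠ 0 := Int.cast_ne_zero.2 hr.ne_zero
      rcases mul_eq_zero.1 hev with h | h
      · exact hβne h
      · exact hr0 (by simpa using h)
  set sc : Finset ℤ := hcfin.toFinset with hsc_def
  have hc_off : ∀ i ∉ sc, c i = 0 := by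
    intro i hi
    by_contra h
    exact hi (hcfin.mem_toFinset.2 h)
  have hx_c : ∑ i ∈ sc, (c i : ℝ) * β ^ i = x :=
    (hasSum_sum_of_ne_finset_zero (fun i hi => by simp [hc_off i hi])).unique hc
  set u : Finset ℤ := s ∪ sc with hu_def
  obtain ⟨m, hm⟩ : ∃ m : ℤ, ∀ i ∈ u, m ≤ i := by
    rcases u.eq_empty_or_nonempty with h | h
    · exact ⟨0, by simp [h]⟩
    · exact ⟨u.min' h, fun i hi => u.min'_le i hi⟩
  have hcd0 : ∑ i ∈ u, (((c i - d i : ℤ)) : ℝ) * β ^ i = 0 := by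
    have h1 : ∑ i ∈ u, (c i : ℝ) * β ^ i = x := by
      rw [← hx_c]
      exact (Finset.sum_subset Finset.subset_union_right
        (fun i _ hi => by simp [hc_off i hi])).symm
    have h2 : ∑ i ∈ u, (d i : ℝ) * β ^ i = x := by
      rw [← hs_sum]
      exact (Finset.sum_subset Finset.subset_union_left
        (fun i _ hi => by simp [hd_off i hi])).symm
    simp only [Int.cast_sub, sub_mul, Finset.sum_sub_distrib, h1, h2, sub_self]
  set P : Polynomial ℤ := ∑ i ∈ u, Polynomial.C (c i - d i) * Polynomial.X ^ (i - m).toNat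
    with hP_def
  have hPβ : Polynomial.aeval β P = 0 := by
    rw [hP_def, map_sum]
    simp only [map_mul, Polynomial.aeval_C, Polynomial.aeval_X_pow]
    have key2 : ∀ i ∈ u, (algebraMap ℤ ℝ) (c i - d i) * β ^ (i - m).toNat
        = (((c i - d i : ℤ)) : ℝ) * β ^ (i:ℤ) * β ^ (-m) := by
      intro i hi
      rw [← zpow_natCast β, Int.toNat_of_nonneg (by linarith [hm i hi] : (0:ℤ) ≤ i - m),
        zpow_sub₀ hβne, zpow_neg]
      simp only [algebraMap_int_eq, eq_intCast]
      rw [div_eq_mul_inv]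
      ring
    rw [Finset.sum_congr rfl key2, ← Finset.sum_mul, hcd0, zero_mul]
  obtain ⟨q, hq⟩ := minpoly.isIntegrallyClosed_dvd hint hPβ
  have hPα : Polynomial.aeval α P = 0 := by rw [hq, map_mul, hroot, zero_mul]
  have hcdα : ∑ i ∈ u, (((c i - d i : ℤ)) : ℂ) * α ^ (i:ℤ) = 0 := by
    have h1 : Polynomial.aeval α P
        = ∑ i ∈ u, (((c i - d i : ℤ)) : ℂ) * α ^ ((i - m).toNat) := by
      rw [hP_def, map_sum]
      simp only [map_mul, Polynomial.aeval_C, Polynomial.aeval_X_pow,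
        algebraMap_int_eq, eq_intCast, map_intCast]
    have h2 : ∀ i ∈ u, (((c i - d i : ℤ)) : ℂ) * α ^ (i:ℤ)
        = (((c i - d i : ℤ)) : ℂ) * α ^ ((i - m).toNat) * α ^ (m:ℤ) := by
      intro i hi
      rw [← zpow_natCast α, Int.toNat_of_nonneg (by linarith [hm i hi] : (0:ℤ) ≤ i - m),
        mul_assoc, ← zpow_add₀ hα0]
      congr 2
      ring
    rw [Finset.sum_congr rfl h2, ← Finset.sum_mul, ← h1, hPα, zero_mul]
  have htsumc : ∑' i : ℤ, (c i : ℂ) * α ^ i = ∑ i ∈ sc, (c i : ℂ) * α ^ i :=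
    tsum_eq_sum (fun i hi => by simp [hc_off i hi])
  have hfinal : ∑ i ∈ s, (d i : ℂ) * α ^ i = ∑ i ∈ sc, (c i : ℂ) * α ^ i := by
    have h1 : ∑ i ∈ s, (d i : ℂ) * α ^ i = ∑ i ∈ u, (d i : ℂ) * α ^ i :=
      Finset.sum_subset Finset.subset_union_left (fun i _ hi => by simp [hd_off i hi])
    have h2 : ∑ i ∈ sc, (c i : ℂ) * α ^ i = ∑ i ∈ u, (c i : ℂ) * α ^ i :=
      Finset.sum_subset Finset.subset_union_right (fun i _ hi => by simp [hc_off i hi])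
    rw [h1, h2]
    have h3 := hcdα
    simp only [Int.cast_sub, sub_mul, Finset.sum_sub_distrib] at h3
    exact (sub_eq_zero.1 h3).symm
  have hcomplex : HasSum (fun i : ℤ => (d i : ℂ) * α ^ i)
      (∑' i : ℤ, (c i : ℂ) * α ^ i) := by
    rw [htsumc, ← hfinal]
    exact hasSum_sum_of_ne_finset_zero (fun i hi => by simp [hd_off i hi])
  exact ⟨d, hd_bounds, hd_fin, hreal, htail, hcomplex⟩
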